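/- Let f:ℕ^m→ℝ be symmetric, square-summable, and vanishing on diagonals (f(i₁,...,i_m)=0 whenever two arguments coincide). Then the squared ℓ² norm of the symmetrized tensor product f⊗̃f restricted to the complement of the diagonal-free set Δ_{2m} satisfies (2m)!·‖(f⊗̃f)·1_{Δ_{2m}^c}‖²_{ℓ²(ℕ^{2m})} ≤ γ_m · m!·‖f‖²_{ℓ²(ℕ^m)} · sup_j Inf_j(f), where γ_m = 2·(2m−1)!·Σ_{r=1}^m r!·C(m,r)² and Inf_j(f) = Σ_{i₂<...<i_m, all ≠ j} f(j,i₂,...,i_m)². -/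

import Mathlib

open scoped BigOperators

/-- The symmetrized tensor product `f ⊗̃ f` of a kernel `f` of order `m` with itself:
`(f ⊗̃ f)(x) = (1/(2m)!)·Σ_{σ ∈ S_{2m}} f((x∘σ)₁,…,(x∘σ)_m)·f((x∘σ)_{m+1},…,(x∘σ)_{2m})`. -/
noncomputable def symTensorSelf (m : ℕ) (f : (Fin m → ℕ) → ℝ) : (Fin (m + m) → ℕ) → ℝ :=
  fun x => ((m + m).factorial : ℝ)⁻¹ * ∑ σ : Equiv.Perm (Fin (m + m)),
    f (fun i => x (σ (Fin.castAdd m i))) * f (fun i => x (σ (Fin.natAdd m i)))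

/-- The influence of the variable `j` on a kernel `f` of order `m+1`:
`Inf_j(f) = Σ_{j ∉ {i₂<…<i_{m+1}}} f(j,i₂,…,i_{m+1})²`. -/
noncomputable def influence (m : ℕ) (f : (Fin (m + 1) → ℕ) → ℝ) (j : ℕ) : ℝ :=
  ∑' y : Fin m → ℕ,
    if StrictMono y ∧ ∀ i, y i ≠ j then (f (Fin.cons j y)) ^ 2 else 0

open Function

set_option maxHeartbeats 1000000

def preComp {N : ℕ} (σ : Equiv.Perm (Fin N)) : (Fin N → ℕ) ≃ (Fin N → ℕ) where
  toFun x := x ∘ σ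
  invFun x := x ∘ σ.symm
  left_inv x := by funext i; simp
  right_inv x := by funext i; simp

def termFun (n : ℕ) (f : (Fin n → ℕ) → ℝ) (σ : Equiv.Perm (Fin (n + n)))
    (x : Fin (n + n) → ℕ) : ℝ :=
  if ¬ Injective x then
    (f (fun i => x (σ (Fin.castAdd n i))) * f (fun i => x (σ (Fin.natAdd n i)))) ^ 2 else 0

def GFun (n : ℕ) (f : (Fin n → ℕ) → ℝ) (z : Fin (n + n) → ℕ) : ℝ :=
  f (fun i => z (Fin.castAdd n i)) ^ 2 * f (fun i => z (Fin.natAdd n i)) ^ 2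


lemma shared_of_not_inj {n : ℕ} {a b : Fin n → ℕ} (ha : Injective a) (hb : Injective b)
    (h : ¬ Injective (Fin.append a b)) : ∃ i k, a i = b k := by
  by_contra hno
  push_neg at hno
  apply h
  intro p q hpq
  induction p using Fin.addCases with
  | left i =>
    induction q using Fin.addCases with
    | left i' =>
      rw [Fin.append_left, Fin.append_left] at hpq
      rw [ha hpq]
    | right k =>
      rw [Fin.append_left, Fin.append_right] at hpq
      exact absurd hpq (hno i k)
  | right k =>
    induction q using Fin.addCases with
    | left i' =>
      rw [Fin.append_right, Fin.append_left] at hpq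
      exact absurd hpq.symm (hno i' k)
    | right k' =>
      rw [Fin.append_right, Fin.append_right] at hpq
      rw [hb hpq]

lemma exists_decomp (m : ℕ) (j : ℕ) (b : Fin (m + 1) → ℕ) (hb : Injective b)
    (hj : j ∈ Set.range b) :
    ∃ p : Equiv.Perm (Fin (m + 1)) × (Fin m → ℕ),
      (StrictMono p.2 ∧ ∀ i, p.2 i ≠ j) ∧ b = Fin.cons j p.2 ∘ p.1 := by
  classical
  set s : Finset ℕ := (Finset.image b Finset.univ).erase j with hs
  have hjmem : j ∈ Finset.image b Finset.univ := by
    obtain ⟨i, rfl⟩ := hj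
    exact Finset.mem_image_of_mem b (Finset.mem_univ i)
  have hcard : s.card = m := by
    rw [hs, Finset.card_erase_of_mem hjmem, Finset.card_image_of_injective _ hb,
      Finset.card_univ, Fintype.card_fin]
    rfl
  set y : Fin m → ℕ := fun i => s.orderEmbOfFin hcard i with hy
  have hy_mono : StrictMono y := (s.orderEmbOfFin hcard).strictMono
  have hy_mem : ∀ i, y i ∈ s := fun i => Finset.orderEmbOfFin_mem s hcard i
  have hy_ne : ∀ i, y i ≠ j := fun i => Finset.ne_of_mem_erase (hy_mem i)
  have hy_range : Set.range y = ↑s := Finset.range_orderEmbOfFin s hcard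
  set c : Fin (m + 1) → ℕ := Fin.cons j y with hc
  have hc_inj : Injective c := by
    rw [hc, Fin.cons_injective_iff]
    refine ⟨?_, hy_mono.injective⟩
    rw [hy_range]
    exact fun hmem => Finset.notMem_erase j _ hmem
  have hrange : Set.range b = Set.range c := by
    rw [hc, Fin.range_cons, hy_range]
    rw [← Finset.coe_insert, hs, Finset.insert_erase hjmem]
    rw [Finset.coe_image, Finset.coe_univ, Set.image_univ]
  set σ : Equiv.Perm (Fin (m + 1)) :=
    (Equiv.ofInjective b hb).trans ((Equiv.setCongr hrange).trans
      (Equiv.ofInjective c hc_inj).symm) with hσ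
  refine ⟨(σ, y), ⟨hy_mono, hy_ne⟩, ?_⟩
  funext i
  show b i = c (σ i)
  rw [hσ]
  simp only [Equiv.trans_apply, Equiv.setCongr_apply]
  rw [Equiv.apply_ofInjective_symm hc_inj]
  rfl

section count
variable {m : ℕ} {f : (Fin (m + 1) → ℕ) → ℝ}

lemma cons_inj (j : ℕ) : Injective (fun y : Fin m → ℕ => (Fin.cons j y : Fin (m+1) → ℕ)) :=
  fun y₁ y₂ h => by
    have := congrArg Fin.tail h
    simpa [Fin.tail_cons] using this

lemma summable_cons (hsq : Summable (fun x => f x ^ 2)) (j : ℕ) :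
    Summable (fun y : Fin m → ℕ => f (Fin.cons j y) ^ 2) :=
  hsq.comp_injective (cons_inj j)

lemma summable_infl (hsq : Summable (fun x => f x ^ 2)) (j : ℕ) :
    Summable (fun y : Fin m → ℕ =>
      if StrictMono y ∧ ∀ i, y i ≠ j then (f (Fin.cons j y)) ^ 2 else 0) := by
  refine Summable.of_nonneg_of_le (fun y => ?_) (fun y => ?_) (summable_cons hsq j)
  · split <;> positivity
  · split
    · exact le_refl _
    · positivity


lemma count_lemma (hsym : ∀ (σ : Equiv.Perm (Fin (m + 1))) (x : Fin (m + 1) → ℕ), f (x ∘ σ) = f x)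
    (hsq : Summable (fun x => f x ^ 2)) (j : ℕ) :
    (∑' b : Fin (m + 1) → ℕ, if Injective b ∧ j ∈ Set.range b then f b ^ 2 else 0)
      ≤ ((m + 1).factorial : ℝ) * influence m f j := by
  classical
  set g : Equiv.Perm (Fin (m + 1)) × (Fin m → ℕ) → ℝ := fun p =>
    if StrictMono p.2 ∧ ∀ i, p.2 i ≠ j then (f (Fin.cons j p.2)) ^ 2 else 0 with hg
  have hg_nonneg : ∀ p, 0 ≤ g p := fun p => by rw [hg]; dsimp only; split <;> positivity
  have hg_sum : Summable g := by
    have h1 : Summable (fun _ : Equiv.Perm (Fin (m + 1)) => (1 : ℝ)) :=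
      summable_of_finite_support (Set.toFinite _)
    have := h1.mul_of_nonneg (summable_infl hsq j) (fun _ => zero_le_one)
      (fun y => by dsimp only; split <;> positivity)
    refine this.congr fun p => ?_
    rw [hg]; dsimp only; rw [one_mul]
  -- RHS identity
  have hRHS : ∑' p, g p = ((m + 1).factorial : ℝ) * influence m f j := by
    rw [Summable.tsum_prod hg_sum]
    have : ∀ σ : Equiv.Perm (Fin (m + 1)), ∑' y, g (σ, y) = influence m f j := fun σ => rfl
    rw [tsum_fintype]
    simp_rw [this]
    rw [Finset.sum_const, Finset.card_univ, nsmul_eq_mul]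
    congr 1
    rw [Fintype.card_perm, Fintype.card_fin]
  rw [← hRHS]
  -- LHS as subtype sum
  set P : Set (Fin (m + 1) → ℕ) := {b | Injective b ∧ j ∈ Set.range b} with hP
  have hLHS : (∑' b : Fin (m + 1) → ℕ, if Injective b ∧ j ∈ Set.range b then f b ^ 2 else 0)
      = ∑' b : ↥P, f (↑b) ^ 2 := by
    refine Eq.trans (tsum_congr fun b => ?_) (tsum_subtype P (fun b => f b ^ 2)).symm
    by_cases hbP : Injective b ∧ j ∈ Set.range b
    · rw [if_pos hbP]
      exact (Set.indicator_of_mem (show b ∈ P from hbP) fun b => f b ^ 2).symm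
    · rw [if_neg hbP]
      exact (Set.indicator_of_notMem (show b ∉ P from hbP) fun b => f b ^ 2).symm
  rw [hLHS]
  have He : ∀ b : ↥P, ∃ p : Equiv.Perm (Fin (m + 1)) × (Fin m → ℕ),
      (StrictMono p.2 ∧ ∀ i, p.2 i ≠ j) ∧ (b : Fin (m + 1) → ℕ) = Fin.cons j p.2 ∘ p.1 :=
    fun b => exists_decomp m j b b.2.1 b.2.2
  choose e he1 he2 using He
  have he_inj : Injective e := by
    intro b₁ b₂ hbe
    apply Subtype.ext
    rw [he2 b₁, he2 b₂, hbe]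
  refine Summable.tsum_le_tsum_of_inj e he_inj (fun p _ => hg_nonneg p) (fun b => ?_)
    (hsq.subtype P) hg_sum
  rw [hg]
  dsimp only
  rw [if_pos (he1 b)]
  rw [he2 b, hsym]
lemma influence_nonneg (j : ℕ) : 0 ≤ influence m f j := by
  refine tsum_nonneg fun y => ?_
  split <;> positivity

lemma influence_le (hsq : Summable (fun x => f x ^ 2)) (j : ℕ) :
    influence m f j ≤ ∑' x : Fin (m + 1) → ℕ, f x ^ 2 := by
  refine le_trans (Summable.tsum_le_tsum (fun y => ?_) (summable_infl hsq j) (summable_cons hsq j)) ?_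
  · split
    · exact le_refl _
    · positivity
  · exact Summable.tsum_le_tsum_of_inj (fun y => Fin.cons j y) (cons_inj j)
      (fun c _ => by positivity) (fun y => le_refl _) (summable_cons hsq j) hsq

lemma influence_bdd (hsq : Summable (fun x => f x ^ 2)) :
    BddAbove (Set.range (influence m f)) := by
  refine ⟨∑' x : Fin (m + 1) → ℕ, f x ^ 2, ?_⟩
  rintro _ ⟨j, rfl⟩
  exact influence_le hsq j

lemma iSup_influence_nonneg (hsq : Summable (fun x => f x ^ 2)) :
    0 ≤ ⨆ j : ℕ, influence m f j :=
  le_trans (influence_nonneg 0) (le_ciSup (influence_bdd hsq) 0)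

lemma inner_bound
    (hsym : ∀ (σ : Equiv.Perm (Fin (m + 1))) (x : Fin (m + 1) → ℕ), f (x ∘ σ) = f x)
    (hsq : Summable (fun x => f x ^ 2))
    (hdiag : ∀ x : Fin (m + 1) → ℕ, ¬ Function.Injective x → f x = 0)
    (a : Fin (m + 1) → ℕ) (ha : Injective a) :
    (∑' b : Fin (m + 1) → ℕ, if ¬ Injective (Fin.append a b) then f b ^ 2 else 0)
      ≤ ((m : ℝ) + 1) * (((m + 1).factorial : ℝ) * ⨆ j : ℕ, influence m f j) := by
  classical
  set A : Finset ℕ := Finset.image a Finset.univ with hA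
  set C : ℕ → (Fin (m + 1) → ℕ) → ℝ := fun j b =>
    if Injective b ∧ j ∈ Set.range b then f b ^ 2 else 0 with hC
  have hC_nonneg : ∀ j b, 0 ≤ C j b := fun j b => by
    rw [hC]; dsimp only; split <;> positivity
  have hC_sum : ∀ j, Summable (C j) := fun j => by
    refine Summable.of_nonneg_of_le (hC_nonneg j) (fun b => ?_) hsq
    rw [hC]; dsimp only; split
    · exact le_refl _
    · positivity
  have hpoint : ∀ b, (if ¬ Injective (Fin.append a b) then f b ^ 2 else 0)
      ≤ ∑ j ∈ A, C j b := by
    intro b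
    have hsum_nonneg : (0:ℝ) ≤ ∑ j ∈ A, C j b :=
      Finset.sum_nonneg fun j _ => hC_nonneg j b
    by_cases hfb : f b = 0
    · split
      · rw [hfb]; simpa using hsum_nonneg
      · exact hsum_nonneg
    · have hb : Injective b := by
        by_contra hbn
        exact hfb (hdiag b hbn)
      by_cases happ : Injective (Fin.append a b)
      · rw [if_neg (not_not_intro happ)]
        exact hsum_nonneg
      · rw [if_pos happ]
        obtain ⟨i, k, hik⟩ := shared_of_not_inj ha hb happ
        have hmem : a i ∈ A := Finset.mem_image_of_mem a (Finset.mem_univ i)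
        have hval : C (a i) b = f b ^ 2 := by
          rw [hC]; dsimp only
          rw [if_pos ⟨hb, ⟨k, hik.symm⟩⟩]
        calc f b ^ 2 = C (a i) b := hval.symm
          _ ≤ ∑ j ∈ A, C j b :=
            Finset.single_le_sum (fun j _ => hC_nonneg j b) hmem
  have hLsum : Summable (fun b : Fin (m + 1) → ℕ =>
      if ¬ Injective (Fin.append a b) then f b ^ 2 else 0) := by
    refine Summable.of_nonneg_of_le (fun b => ?_) (fun b => ?_) hsq
    · split <;> positivity
    · split
      · exact le_refl _
      · positivity
  calc (∑' b : Fin (m + 1) → ℕ, if ¬ Injective (Fin.append a b) then f b ^ 2 else 0)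
      ≤ ∑' b, ∑ j ∈ A, C j b :=
        Summable.tsum_le_tsum hpoint hLsum (summable_sum fun j _ => hC_sum j)
    _ = ∑ j ∈ A, ∑' b, C j b := Summable.tsum_finsetSum fun j _ => hC_sum j
    _ ≤ ∑ j ∈ A, ((m + 1).factorial : ℝ) * (⨆ j : ℕ, influence m f j) := by
        refine Finset.sum_le_sum fun j _ => ?_
        refine le_trans (count_lemma hsym hsq j) ?_
        exact mul_le_mul_of_nonneg_left (le_ciSup (influence_bdd hsq) j)
          (by positivity)
    _ = (A.card : ℝ) * (((m + 1).factorial : ℝ) * ⨆ j : ℕ, influence m f j) := by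
        rw [Finset.sum_const, nsmul_eq_mul]
    _ ≤ ((m : ℝ) + 1) * (((m + 1).factorial : ℝ) * ⨆ j : ℕ, influence m f j) := by
        refine mul_le_mul_of_nonneg_right ?_ ?_
        · have : A.card ≤ m + 1 := by
            refine le_trans (Finset.card_image_le) ?_
            rw [Finset.card_univ, Fintype.card_fin]
          exact_mod_cast this
        · exact mul_nonneg (by positivity) (iSup_influence_nonneg hsq)

end count

/-- For a symmetric square-summable kernel `f` of order `m+1 ≥ 1`
vanishing on diagonals,
`(2(m+1))!·‖(f⊗̃f)·1_{Δᶜ}‖² ≤ γ_{m+1}·(m+1)!·‖f‖²·sup_j Inf_j(f)`, where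
`γ_{m+1} = 2·(2(m+1)−1)!·Σ_{r=1}^{m+1} r!·C(m+1,r)²`. -/
theorem stmt16 (m : ℕ) (f : (Fin (m + 1) → ℕ) → ℝ)
    (hsym : ∀ (σ : Equiv.Perm (Fin (m + 1))) (x : Fin (m + 1) → ℕ), f (x ∘ σ) = f x)
    (hsq : Summable (fun x => f x ^ 2))
    (hdiag : ∀ x : Fin (m + 1) → ℕ, ¬ Function.Injective x → f x = 0) :
    ((2 * (m + 1)).factorial : ℝ) *
        ∑' x : Fin ((m + 1) + (m + 1)) → ℕ,
          (if ¬ Function.Injective x then symTensorSelf (m + 1) f x else 0) ^ 2 ≤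
      (2 * ((2 * (m + 1) - 1).factorial : ℝ) *
          ∑ r ∈ Finset.Icc 1 (m + 1), (r.factorial : ℝ) * ((m + 1).choose r : ℝ) ^ 2) *
        ((m + 1).factorial : ℝ) * (∑' x : Fin (m + 1) → ℕ, f x ^ 2) *
        ⨆ j : ℕ, influence m f j := by
  classical
  set S : ℝ := ⨆ j : ℕ, influence m f j with hS
  set Q : ℝ := ∑' x : Fin (m + 1) → ℕ, f x ^ 2 with hQ
  have hS0 : 0 ≤ S := iSup_influence_nonneg hsq
  have hQ0 : 0 ≤ Q := tsum_nonneg fun x => sq_nonneg _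
  set K : ℝ := ((m : ℝ) + 1) * (((m + 1).factorial : ℝ) * S) with hK
  have hNfac_pos : (0:ℝ) < (((m + 1) + (m + 1)).factorial : ℝ) := by
    exact_mod_cast Nat.factorial_pos _
  -- summability of G
  have h0 : Summable (fun p : (Fin (m + 1) → ℕ) × (Fin (m + 1) → ℕ) => f p.1 ^ 2 * f p.2 ^ 2) :=
    hsq.mul_of_nonneg hsq (fun x => sq_nonneg _) (fun x => sq_nonneg _)
  have hG_sum : Summable (GFun (m + 1) f) := by
    refine (Equiv.summable_iff (Fin.appendEquiv (m + 1) (m + 1))).mp (h0.congr fun p => ?_)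
    show f p.1 ^ 2 * f p.2 ^ 2 = GFun (m + 1) f (Fin.append p.1 p.2)
    simp only [GFun]
    have e1 : (fun i => Fin.append p.1 p.2 (Fin.castAdd (m + 1) i)) = p.1 := by
      funext i; rw [Fin.append_left]
    have e2 : (fun i => Fin.append p.1 p.2 (Fin.natAdd (m + 1) i)) = p.2 := by
      funext i; rw [Fin.append_right]
    rw [e1, e2]
  have hterm_nonneg : ∀ σ x, 0 ≤ termFun (m + 1) f σ x := fun σ x => by
    simp only [termFun]; split <;> positivity
  have hGσ_sum : ∀ σ : Equiv.Perm (Fin ((m + 1) + (m + 1))),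
      Summable (fun x : Fin ((m + 1) + (m + 1)) → ℕ => GFun (m + 1) f (x ∘ σ)) := fun σ =>
    (Equiv.summable_iff (preComp σ)).mpr hG_sum
  have hterm_le : ∀ σ x, termFun (m + 1) f σ x ≤ GFun (m + 1) f (x ∘ σ) := by
    intro σ x
    simp only [termFun, GFun]
    split
    · rw [mul_pow]
      exact le_refl _
    · positivity
  have hterm_sum : ∀ σ, Summable (termFun (m + 1) f σ) := fun σ =>
    Summable.of_nonneg_of_le (hterm_nonneg σ) (hterm_le σ) (hGσ_sum σ)
  -- pointwise Cauchy-Schwarz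
  have key1 : ∀ x : Fin ((m + 1) + (m + 1)) → ℕ,
      (if ¬ Injective x then symTensorSelf (m + 1) f x else 0) ^ 2
        ≤ (((m + 1) + (m + 1)).factorial : ℝ)⁻¹ * ∑ σ : Equiv.Perm (Fin ((m + 1) + (m + 1))), termFun (m + 1) f σ x := by
    intro x
    have hsum_nonneg : (0:ℝ) ≤ ∑ σ : Equiv.Perm (Fin ((m + 1) + (m + 1))), termFun (m + 1) f σ x :=
      Finset.sum_nonneg fun σ _ => hterm_nonneg σ x
    by_cases hx : Injective x
    · rw [if_neg (not_not_intro hx)]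
      simpa using mul_nonneg (inv_nonneg.mpr hNfac_pos.le) hsum_nonneg
    · rw [if_pos hx]
      have hcheb := sq_sum_le_card_mul_sum_sq (s := (Finset.univ : Finset (Equiv.Perm (Fin ((m + 1) + (m + 1))))))
        (f := fun σ => f (fun i => x (σ (Fin.castAdd (m + 1) i))) * f (fun i => x (σ (Fin.natAdd (m + 1) i))))
      rw [Finset.card_univ, Fintype.card_perm, Fintype.card_fin] at hcheb
      have hterm_eq : ∀ σ : Equiv.Perm (Fin ((m + 1) + (m + 1))), termFun (m + 1) f σ x
          = (f (fun i => x (σ (Fin.castAdd (m + 1) i))) * f (fun i => x (σ (Fin.natAdd (m + 1) i)))) ^ 2 :=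
        fun σ => if_pos hx
      simp only [symTensorSelf, hterm_eq]
      set c : ℝ := (((m + 1) + (m + 1)).factorial : ℝ)
      set S1 : ℝ := ∑ σ : Equiv.Perm (Fin ((m + 1) + (m + 1))),
        f (fun i => x (σ (Fin.castAdd (m + 1) i))) * f (fun i => x (σ (Fin.natAdd (m + 1) i)))
      set S2 : ℝ := ∑ σ : Equiv.Perm (Fin ((m + 1) + (m + 1))),
        (f (fun i => x (σ (Fin.castAdd (m + 1) i))) * f (fun i => x (σ (Fin.natAdd (m + 1) i)))) ^ 2
      have hc : c ≠ 0 := ne_of_gt hNfac_pos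
      calc (c⁻¹ * S1) ^ 2 = c⁻¹ ^ 2 * S1 ^ 2 := by ring
        _ ≤ c⁻¹ ^ 2 * (c * S2) := by
            refine mul_le_mul_of_nonneg_left ?_ (by positivity)
            exact_mod_cast hcheb
        _ = c⁻¹ * S2 * (c⁻¹ * c) := by ring
        _ = c⁻¹ * S2 := by rw [inv_mul_cancel₀ hc, mul_one]
  have hbound_sum : Summable (fun x : Fin ((m + 1) + (m + 1)) → ℕ =>
      (((m + 1) + (m + 1)).factorial : ℝ)⁻¹ * ∑ σ : Equiv.Perm (Fin ((m + 1) + (m + 1))), termFun (m + 1) f σ x) :=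
    (summable_sum fun σ _ => hterm_sum σ).mul_left _
  have hF_sum : Summable (fun x : Fin ((m + 1) + (m + 1)) → ℕ =>
      (if ¬ Injective x then symTensorSelf (m + 1) f x else 0) ^ 2) :=
    Summable.of_nonneg_of_le (fun x => sq_nonneg _) key1 hbound_sum
  -- each sigma term equals the identity term
  have step4 : ∀ σ : Equiv.Perm (Fin ((m + 1) + (m + 1))),
      ∑' x : Fin ((m + 1) + (m + 1)) → ℕ, termFun (m + 1) f σ x = ∑' x : Fin ((m + 1) + (m + 1)) → ℕ, termFun (m + 1) f 1 x := by
    intro σ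
    rw [← Equiv.tsum_eq (preComp σ.symm) (termFun (m + 1) f σ)]
    refine tsum_congr fun z => ?_
    show termFun (m + 1) f σ (z ∘ ⇑σ.symm) = termFun (m + 1) f 1 z
    simp only [termFun]
    have hinj : Injective (z ∘ ⇑σ.symm) ↔ Injective z := Equiv.injective_comp σ.symm z
    by_cases hz : Injective z
    · rw [if_neg (not_not_intro (hinj.mpr hz)), if_neg (not_not_intro hz)]
    · rw [if_pos (fun hc => hz (hinj.mp hc)), if_pos hz]
      have e1 : (fun i => (z ∘ ⇑σ.symm) (σ (Fin.castAdd (m + 1) i)))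
          = fun i => z ((1 : Equiv.Perm (Fin ((m + 1) + (m + 1)))) (Fin.castAdd (m + 1) i)) := by
        funext i; simp
      have e2 : (fun i => (z ∘ ⇑σ.symm) (σ (Fin.natAdd (m + 1) i)))
          = fun i => z ((1 : Equiv.Perm (Fin ((m + 1) + (m + 1)))) (Fin.natAdd (m + 1) i)) := by
        funext i; simp
      rw [e1, e2]
  -- total bound computation
  have step3 : (∑' x : Fin ((m + 1) + (m + 1)) → ℕ,
      (((m + 1) + (m + 1)).factorial : ℝ)⁻¹ * ∑ σ : Equiv.Perm (Fin ((m + 1) + (m + 1))), termFun (m + 1) f σ x)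
      = ∑' x : Fin ((m + 1) + (m + 1)) → ℕ, termFun (m + 1) f 1 x := by
    rw [tsum_mul_left, Summable.tsum_finsetSum fun σ _ => hterm_sum σ]
    simp_rw [step4]
    rw [Finset.sum_const, Finset.card_univ, Fintype.card_perm, Fintype.card_fin, nsmul_eq_mul]
    rw [← mul_assoc, inv_mul_cancel₀ (ne_of_gt hNfac_pos), one_mul]
  -- to product space
  set h2 : (Fin (m + 1) → ℕ) × (Fin (m + 1) → ℕ) → ℝ := fun p =>
    if ¬ Injective (Fin.append p.1 p.2) then (f p.1 * f p.2) ^ 2 else 0 with hh2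
  have hh2_eq : ∀ p, termFun (m + 1) f 1 (Fin.appendEquiv (m + 1) (m + 1) p) = h2 p := by
    intro p
    show termFun (m + 1) f 1 (Fin.append p.1 p.2) = h2 p
    simp only [termFun, hh2, Equiv.Perm.coe_one, id_eq]
    have e1 : (fun i => Fin.append p.1 p.2 (Fin.castAdd (m + 1) i)) = p.1 := by
      funext i; rw [Fin.append_left]
    have e2 : (fun i => Fin.append p.1 p.2 (Fin.natAdd (m + 1) i)) = p.2 := by
      funext i; rw [Fin.append_right]
    rw [e1, e2]
  have hh2_sum : Summable h2 := by
    refine Summable.of_nonneg_of_le (fun p => ?_) (fun p => ?_) h0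
    · simp only [hh2]; split <;> positivity
    · simp only [hh2]; split
      · rw [mul_pow]
      · positivity
  have step6 : (∑' x : Fin ((m + 1) + (m + 1)) → ℕ, termFun (m + 1) f 1 x) = ∑' p, h2 p := by
    rw [← Equiv.tsum_eq (Fin.appendEquiv (m + 1) (m + 1)) (termFun (m + 1) f 1)]
    exact tsum_congr hh2_eq
  have step7 : (∑' p, h2 p) = ∑' a : Fin (m + 1) → ℕ, ∑' b : Fin (m + 1) → ℕ, h2 (a, b) :=
    Summable.tsum_prod hh2_sum
  -- inner bound
  have step8 : ∀ a : Fin (m + 1) → ℕ, (∑' b : Fin (m + 1) → ℕ, h2 (a, b)) ≤ f a ^ 2 * K := by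
    intro a
    by_cases ha : Injective a
    · have heq : ∀ b, h2 (a, b) = f a ^ 2 *
          (if ¬ Injective (Fin.append a b) then f b ^ 2 else 0) := by
        intro b
        simp only [hh2]
        split
        · rw [mul_pow]
        · rw [mul_zero]
      rw [tsum_congr heq, tsum_mul_left]
      exact mul_le_mul_of_nonneg_left (inner_bound hsym hsq hdiag a ha) (sq_nonneg _)
    · have hfa : f a = 0 := hdiag a ha
      have heq : ∀ b, h2 (a, b) = 0 := by
        intro b
        simp only [hh2]
        split
        · rw [hfa]; ring
        · rfl
      rw [tsum_congr heq, tsum_zero, hfa]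
      have : (0:ℝ) ≤ K := mul_nonneg (by positivity) (mul_nonneg (by positivity) hS0)
      simpa using this
  have step9 : Summable (fun a : Fin (m + 1) → ℕ => ∑' b : Fin (m + 1) → ℕ, h2 (a, b)) := hh2_sum.prod
  have step10 : (∑' a : Fin (m + 1) → ℕ, ∑' b : Fin (m + 1) → ℕ, h2 (a, b)) ≤ Q * K := by
    rw [hQ, ← tsum_mul_right]
    exact Summable.tsum_le_tsum step8 step9 (hsq.mul_right K)
  -- combine
  have htsum : (∑' x : Fin ((m + 1) + (m + 1)) → ℕ,
      (if ¬ Injective x then symTensorSelf (m + 1) f x else 0) ^ 2) ≤ Q * K := by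
    calc (∑' x : Fin ((m + 1) + (m + 1)) → ℕ, (if ¬ Injective x then symTensorSelf (m + 1) f x else 0) ^ 2)
        ≤ ∑' x : Fin ((m + 1) + (m + 1)) → ℕ,
            (((m + 1) + (m + 1)).factorial : ℝ)⁻¹ * ∑ σ : Equiv.Perm (Fin ((m + 1) + (m + 1))), termFun (m + 1) f σ x :=
          Summable.tsum_le_tsum key1 hF_sum hbound_sum
      _ = ∑' x : Fin ((m + 1) + (m + 1)) → ℕ, termFun (m + 1) f 1 x := step3
      _ = ∑' p, h2 p := step6
      _ = ∑' a : Fin (m + 1) → ℕ, ∑' b : Fin (m + 1) → ℕ, h2 (a, b) := step7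
      _ ≤ Q * K := step10
  -- final arithmetic
  have hfac_id : ((2 * (m + 1)).factorial : ℝ) = 2 * ((m : ℝ) + 1) * ((2 * (m + 1) - 1).factorial : ℝ) := by
    have h1 : 0 < 2 * (m + 1) := by omega
    have := Nat.mul_factorial_pred h1.ne'
    have hcast : ((2 * (m + 1) : ℕ) : ℝ) * ((2 * (m + 1) - 1).factorial : ℝ) = ((2 * (m + 1)).factorial : ℝ) := by
      exact_mod_cast congrArg (fun k : ℕ => (k : ℝ)) this
    rw [← hcast]
    push_cast
    ring
  have hSig : ((m : ℝ) + 1) ^ 2 ≤ ∑ r ∈ Finset.Icc 1 (m + 1), (r.factorial : ℝ) * ((m + 1).choose r : ℝ) ^ 2 := by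
    have hmem : 1 ∈ Finset.Icc 1 (m + 1) := by
      rw [Finset.mem_Icc]
      omega
    have := Finset.single_le_sum
      (f := fun r => (r.factorial : ℝ) * ((m + 1).choose r : ℝ) ^ 2)
      (fun r _ => by positivity) hmem
    refine le_trans (le_of_eq ?_) this
    rw [Nat.factorial_one, Nat.choose_one_right]
    push_cast
    ring
  have hmain : ((2 * (m + 1)).factorial : ℝ) *
      (∑' x : Fin ((m + 1) + (m + 1)) → ℕ, (if ¬ Injective x then symTensorSelf (m + 1) f x else 0) ^ 2)
      ≤ ((2 * (m + 1)).factorial : ℝ) * (Q * K) :=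
    mul_le_mul_of_nonneg_left htsum (by positivity)
  refine le_trans hmain ?_
  have h1 : ((2 * (m + 1)).factorial : ℝ) * (Q * K)
      = ((m : ℝ) + 1) ^ 2 * (2 * ((2 * (m + 1) - 1).factorial : ℝ) * (((m + 1).factorial : ℝ)) * Q * S) := by
    rw [hfac_id, hK]
    ring
  have hnn : (0:ℝ) ≤ 2 * ((2 * (m + 1) - 1).factorial : ℝ) * (((m + 1).factorial : ℝ)) * Q * S := by
    have : (0:ℝ) ≤ ((2 * (m + 1) - 1).factorial : ℝ) := by positivity
    have h2 : (0:ℝ) ≤ (((m + 1).factorial : ℝ)) := by positivity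
    nlinarith [hQ0, hS0, this, h2, mul_nonneg hQ0 hS0, mul_nonneg this h2,
      mul_nonneg (mul_nonneg this h2) (mul_nonneg hQ0 hS0)]
  rw [h1]
  calc ((m : ℝ) + 1) ^ 2 * (2 * ((2 * (m + 1) - 1).factorial : ℝ) * (((m + 1).factorial : ℝ)) * Q * S)
      ≤ (∑ r ∈ Finset.Icc 1 (m + 1), (r.factorial : ℝ) * ((m + 1).choose r : ℝ) ^ 2) *
        (2 * ((2 * (m + 1) - 1).factorial : ℝ) * (((m + 1).factorial : ℝ)) * Q * S) :=
        mul_le_mul_of_nonneg_right hSig hnn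
    _ = (2 * ((2 * (m + 1) - 1).factorial : ℝ) *
          ∑ r ∈ Finset.Icc 1 (m + 1), (r.factorial : ℝ) * ((m + 1).choose r : ℝ) ^ 2) *
        ((m + 1).factorial : ℝ) * Q * S := by ring
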